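/- Let R > 0 and let g : ℝⁿ → ℝ be differentiable with ∇g Lipschitz continuous with constant Lip(g). Let h(x) = −∑_i log(x_i) be Burg's entropy. Then for L = Lip(g)·R², the function L·h − g is convex on (0, R]ⁿ; equivalently, for all x ∈ (0, R]ⁿ and d ∈ ℝⁿ (assuming g is C²), ⟨∇²g(x) d, d⟩ ≤ Lip(g)·R²·∑_i d_i²/x_i². -/

import Mathlib

open scoped RealInnerProductSpace

lemma convexOn_of_fderiv_monotone {E : Type*} [NormedAddCommGroup E] [NormedSpace ℝ E]
    {s : Set E} (hs : Convex ℝ s) {f : E → ℝ} {f' : E → (E →L[ℝ] ℝ)}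
    (hf : ∀ x ∈ s, HasFDerivAt f (f' x) x)
    (hmono : ∀ x ∈ s, ∀ y ∈ s, 0 ≤ (f' y - f' x) (y - x)) :
    ConvexOn ℝ s f := by
  refine ⟨hs, fun x hx y hy a b ha hb hab => ?_⟩
  set γ : ℝ → E := fun t => x + t • (y - x) with hγ
  have hγs : ∀ t ∈ Set.Icc (0:ℝ) 1, γ t ∈ s := by
    intro t ht
    have := hs hx hy (by linarith [ht.2] : (0:ℝ) ≤ 1 - t) ht.1 (by ring)
    convert this using 1
    simp only [hγ]
    module
  have hγd : ∀ t : ℝ, HasDerivAt γ (y - x) t := by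
    intro t
    have h1 : HasDerivAt (fun t : ℝ => t • (y - x)) ((1:ℝ) • (y - x)) t :=
      (hasDerivAt_id t).smul_const (y - x)
    have h2 := h1.const_add x
    rw [one_smul] at h2
    exact h2
  set φ : ℝ → ℝ := f ∘ γ with hφ
  set ψ : ℝ → ℝ := fun t => (f' (γ t)) (y - x) with hψ
  have hφd : ∀ t ∈ Set.Icc (0:ℝ) 1, HasDerivAt φ (ψ t) t := by
    intro t ht
    exact (hf _ (hγs t ht)).comp_hasDerivAt t (hγd t)
  have hmonoψ : MonotoneOn (deriv φ) (interior (Set.Icc (0:ℝ) 1)) := by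
    rw [interior_Icc]
    intro u hu v hv huv
    rw [(hφd u (Set.mem_Icc_of_Ioo hu)).deriv, (hφd v (Set.mem_Icc_of_Ioo hv)).deriv]
    rcases eq_or_lt_of_le huv with rfl | hlt
    · exact le_rfl
    have hkey := hmono (γ u) (hγs u (Set.mem_Icc_of_Ioo hu)) (γ v) (hγs v (Set.mem_Icc_of_Ioo hv))
    have hdiff : γ v - γ u = (v - u) • (y - x) := by
      simp only [hγ]; module
    rw [hdiff] at hkey
    simp only [ContinuousLinearMap.sub_apply, ContinuousLinearMap.map_smul, smul_eq_mul] at hkey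
    have : 0 ≤ (v - u) * (ψ v - ψ u) := by
      simp only [hψ]; nlinarith [hkey]
    nlinarith [this, sub_pos.mpr hlt]
  have hconv : ConvexOn ℝ (Set.Icc (0:ℝ) 1) φ :=
    hmonoψ.convexOn_of_deriv (convex_Icc 0 1)
      (fun t ht => (hφd t ht).continuousAt.continuousWithinAt)
      (by
        rw [interior_Icc]
        exact fun t ht =>
          (hφd t (Set.mem_Icc_of_Ioo ht)).differentiableAt.differentiableWithinAt)
  have h01 : (0:ℝ) ∈ Set.Icc (0:ℝ) 1 := by constructor <;> norm_num
  have h11 : (1:ℝ) ∈ Set.Icc (0:ℝ) 1 := by constructor <;> norm_num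
  have := hconv.2 h01 h11 ha hb hab
  simp only [smul_eq_mul, mul_zero, mul_one, zero_add, hφ, Function.comp, hγ, zero_smul,
    one_smul, add_zero, add_sub_cancel] at this
  have hx' : x + b • (y - x) = a • x + b • y := by
    have : a = 1 - b := by linarith
    rw [this]; module
  rw [hx'] at this
  simpa using this

set_option maxHeartbeats 1000000 in
theorem stmt19 {n : ℕ} (R Lg : ℝ) (hR : 0 < R) (hLg : 0 ≤ Lg)
    (g : EuclideanSpace ℝ (Fin n) → ℝ)
    (g' : EuclideanSpace ℝ (Fin n) → EuclideanSpace ℝ (Fin n))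
    (g'' : EuclideanSpace ℝ (Fin n) → (EuclideanSpace ℝ (Fin n) →L[ℝ] EuclideanSpace ℝ (Fin n)))
    (hg : ∀ x, HasGradientAt g (g' x) x)
    (hlip : LipschitzWith (Real.toNNReal Lg) g')
    (hg'' : ∀ x, HasFDerivAt g' (g'' x) x) :
    ConvexOn ℝ {x : EuclideanSpace ℝ (Fin n) | ∀ i, 0 < x i ∧ x i ≤ R}
      (fun x => (Lg * R ^ 2) * (-∑ i, Real.log (x i)) - g x) ∧
    ∀ x : EuclideanSpace ℝ (Fin n), (∀ i, 0 < x i ∧ x i ≤ R) →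
      ∀ d : EuclideanSpace ℝ (Fin n),
        ⟪g'' x d, d⟫ ≤ Lg * R ^ 2 * ∑ i, (d i) ^ 2 / (x i) ^ 2 := by
  set c : ℝ := Lg * R ^ 2 with hc
  have hnormsq : ∀ d : EuclideanSpace ℝ (Fin n), ‖d‖ ^ 2 = ∑ i, (d i) ^ 2 := by
    intro d
    rw [← real_inner_self_eq_norm_sq]
    simp [PiLp.inner_apply, RCLike.inner_apply, conj_trivial, sq]
    rw [← sq, EuclideanSpace.norm_sq_eq]
    exact Finset.sum_congr rfl fun i _ => by rw [Real.norm_eq_abs, sq_abs, sq]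
  have hLipR : ∀ u v : EuclideanSpace ℝ (Fin n), ‖g' u - g' v‖ ≤ Lg * ‖u - v‖ := by
    intro u v
    have := hlip.dist_le_mul u v
    rwa [Real.coe_toNNReal _ hLg, dist_eq_norm, dist_eq_norm] at this
  constructor
  · -- convexity
    set S : Set (EuclideanSpace ℝ (Fin n)) := {x | ∀ i, 0 < x i ∧ x i ≤ R} with hS
    have hSconv : Convex ℝ S := by
      intro u hu v hv a b ha hb hab i
      have hui := hu i
      have hvi := hv i
      have happ : (a • u + b • v) i = a * u i + b * v i := rfl
      constructor
      · rw [happ]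
        rcases eq_or_lt_of_le ha with h | h
        · have hb1 : b = 1 := by linarith
          rw [← h, hb1]; simpa using hvi.1
        · nlinarith [hvi.1, mul_nonneg hb hvi.1.le]
      · rw [happ]; nlinarith [mul_le_mul_of_nonneg_left hui.2 ha,
          mul_le_mul_of_nonneg_left hvi.2 hb]
    set F' : EuclideanSpace ℝ (Fin n) → (EuclideanSpace ℝ (Fin n) →L[ℝ] ℝ) := fun x =>
      c • (-(∑ i, (x i)⁻¹ •
          (EuclideanSpace.proj i : EuclideanSpace ℝ (Fin n) →L[ℝ] ℝ))) -
        (InnerProductSpace.toDual ℝ (EuclideanSpace ℝ (Fin n)) (g' x) :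
          EuclideanSpace ℝ (Fin n) →L[ℝ] ℝ) with hF'
    have hfd : ∀ x ∈ S,
        HasFDerivAt (fun x : EuclideanSpace ℝ (Fin n) =>
          c * (-∑ i, Real.log (x i)) - g x) (F' x) x := by
      intro x hxS
      have hsum : HasFDerivAt (fun x : EuclideanSpace ℝ (Fin n) => ∑ i, Real.log (x i))
          (∑ i, (x i)⁻¹ •
            (EuclideanSpace.proj i : EuclideanSpace ℝ (Fin n) →L[ℝ] ℝ)) x := by
        apply HasFDerivAt.fun_sum
        intro i _
        have hlog := Real.hasDerivAt_log (ne_of_gt (hxS i).1)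
        exact hlog.comp_hasFDerivAt x
          (EuclideanSpace.proj i : EuclideanSpace ℝ (Fin n) →L[ℝ] ℝ).hasFDerivAt
      exact ((hsum.neg).const_mul c).sub (hg x).hasFDerivAt
    have happ : ∀ w d : EuclideanSpace ℝ (Fin n),
        (F' w) d = c * (-∑ i, (w i)⁻¹ * d i) - ⟪g' w, d⟫ := by
      intro w d
      simp [hF', ContinuousLinearMap.sum_apply, smul_eq_mul, Finset.mul_sum,
        InnerProductSpace.toDual_apply_apply, PiLp.proj_apply]
    have hm : ∀ u ∈ S, ∀ v ∈ S, 0 ≤ (F' v - F' u) (v - u) := by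
      intro u hu v hv
      have hsubi : ∀ i, (v - u) i = v i - u i := fun i => rfl
      have hI : ⟪g' v - g' u, v - u⟫ ≤ Lg * ∑ i, (v i - u i) ^ 2 := by
        have h2 := real_inner_le_norm (g' v - g' u) (v - u)
        have h3 := hLipR v u
        have h4 : ‖v - u‖ ^ 2 = ∑ i, (v i - u i) ^ 2 := by
          rw [hnormsq (v - u)]
          exact Finset.sum_congr rfl fun i _ => by rw [hsubi]
        nlinarith [norm_nonneg (v - u), norm_nonneg (g' v - g' u)]
      have hH : ∀ i ∈ Finset.univ, (v i - u i) ^ 2 / R ^ 2 ≤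
          ((u i)⁻¹ - (v i)⁻¹) * (v i - u i) := by
        intro i _
        have hui := hu i
        have hvi := hv i
        have heq : ((u i)⁻¹ - (v i)⁻¹) * (v i - u i) = (v i - u i) ^ 2 / (u i * v i) := by
          have h1 : u i ≠ 0 := ne_of_gt hui.1
          have h2 : v i ≠ 0 := ne_of_gt hvi.1
          field_simp
        rw [heq]
        apply div_le_div_of_nonneg_left (sq_nonneg _) (mul_pos hui.1 hvi.1)
        nlinarith [hui.1, hvi.1, hui.2, hvi.2]
      have hSum : (∑ i, (v i - u i) ^ 2) / R ^ 2 ≤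
          ∑ i, ((u i)⁻¹ - (v i)⁻¹) * (v i - u i) := by
        rw [Finset.sum_div]
        exact Finset.sum_le_sum hH
      have hval : (F' v - F' u) (v - u) =
          c * ∑ i, ((u i)⁻¹ - (v i)⁻¹) * (v i - u i) - ⟪g' v - g' u, v - u⟫ := by
        rw [ContinuousLinearMap.sub_apply, happ, happ, inner_sub_left]
        have hs : ∑ i, ((u i)⁻¹ - (v i)⁻¹) * (v i - u i) =
            (∑ i, (u i)⁻¹ * (v i - u i)) - ∑ i, (v i)⁻¹ * (v i - u i) := by
          rw [← Finset.sum_sub_distrib]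
          exact Finset.sum_congr rfl fun i _ => by ring
        simp only [hsubi, hs]
        ring
      rw [hval]
      have hcs : c * ((∑ i, (v i - u i) ^ 2) / R ^ 2) = Lg * ∑ i, (v i - u i) ^ 2 := by
        rw [hc]; field_simp
      nlinarith [mul_le_mul_of_nonneg_left hSum (by positivity : (0:ℝ) ≤ c)]
    exact convexOn_of_fderiv_monotone hSconv hfd hm
  · -- second-order bound
    intro x hx d
    have hb : ‖g'' x‖ ≤ Lg := by
      have := (hg'' x).le_of_lipschitz hlip
      rwa [Real.coe_toNNReal _ hLg] at this
    have h1 : ⟪g'' x d, d⟫ ≤ Lg * ‖d‖ ^ 2 := by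
      have h2 := real_inner_le_norm (g'' x d) d
      have h3 := (g'' x).le_opNorm d
      nlinarith [norm_nonneg d, norm_nonneg (g'' x d), norm_nonneg (g'' x)]
    have hsum : ∑ i, (d i) ^ 2 ≤ R ^ 2 * ∑ i, (d i) ^ 2 / (x i) ^ 2 := by
      rw [Finset.mul_sum]
      apply Finset.sum_le_sum
      intro i _
      have hxi := (hx i).1
      have hxiR := (hx i).2
      have hle : (x i) ^ 2 ≤ R ^ 2 := by nlinarith
      calc (d i) ^ 2 = (d i) ^ 2 / (x i) ^ 2 * (x i) ^ 2 := by
            field_simp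
        _ ≤ (d i) ^ 2 / (x i) ^ 2 * R ^ 2 :=
            mul_le_mul_of_nonneg_left hle (by positivity)
        _ = R ^ 2 * ((d i) ^ 2 / (x i) ^ 2) := by ring
    calc ⟪g'' x d, d⟫ ≤ Lg * ‖d‖ ^ 2 := h1
      _ = Lg * ∑ i, (d i) ^ 2 := by rw [hnormsq]
      _ ≤ Lg * (R ^ 2 * ∑ i, (d i) ^ 2 / (x i) ^ 2) := mul_le_mul_of_nonneg_left hsum hLg
      _ = Lg * R ^ 2 * ∑ i, (d i) ^ 2 / (x i) ^ 2 := by ring
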